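/- Let H₀, H₁, K₁ be complex Hilbert spaces, and let T₀ ∈ B(H₀), T₁ ∈ B(H₁), V₁ ∈ B(K₁), K ∈ B(H₁, K₁), A ∈ B(H₁, H₀). Define the block operators V on K₁ ⊕₂ H₁ by V(k, h) = (V₁k + Kh, T₁h), R on H₀ ⊕₂ H₁ by R(x, h) = (T₀x + Ah, T₁h), and R₀ on H₀ ⊕₂ K₁ ⊕₂ H₁ by R₀(x, k, h) = (T₀x + Ah, V₁k + Kh, T₁h). If V is power bounded, then R is power bounded if and only if R₀ is power bounded. -/

import Mathlib

noncomputable section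

/-- An operator is power bounded if the norms of its powers are uniformly bounded. -/
def PowerBounded {H : Type*} [NormedAddCommGroup H] [NormedSpace ℂ H] (T : H →L[ℂ] H) : Prop :=
  ∃ C : ℝ, ∀ n : ℕ, ‖T ^ n‖ ≤ C

/-- Proposition 2.5 (1), power bounded case: with
`V(k,h) = (V₁k + Kh, T₁h)`, `R(x,h) = (T₀x + Ah, T₁h)` and
`R₀(x,k,h) = (T₀x + Ah, V₁k + Kh, T₁h)`, if `V` is power bounded then
`R` is power bounded iff `R₀` is power bounded. -/
theorem powerBounded_R_iff_R₀
    {H₀ H₁ K₁ : Type}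
    [NormedAddCommGroup H₀] [InnerProductSpace ℂ H₀] [CompleteSpace H₀]
    [NormedAddCommGroup H₁] [InnerProductSpace ℂ H₁] [CompleteSpace H₁]
    [NormedAddCommGroup K₁] [InnerProductSpace ℂ K₁] [CompleteSpace K₁]
    (T₀ : H₀ →L[ℂ] H₀) (T₁ : H₁ →L[ℂ] H₁) (V₁ : K₁ →L[ℂ] K₁)
    (K : H₁ →L[ℂ] K₁) (A : H₁ →L[ℂ] H₀)
    (V : WithLp 2 (K₁ × H₁) →L[ℂ] WithLp 2 (K₁ × H₁))
    (hV : ∀ (k : K₁) (h : H₁),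
      V ((WithLp.equiv 2 (K₁ × H₁)).symm (k, h))
        = (WithLp.equiv 2 (K₁ × H₁)).symm (V₁ k + K h, T₁ h))
    (R : WithLp 2 (H₀ × H₁) →L[ℂ] WithLp 2 (H₀ × H₁))
    (hR : ∀ (x : H₀) (h : H₁),
      R ((WithLp.equiv 2 (H₀ × H₁)).symm (x, h))
        = (WithLp.equiv 2 (H₀ × H₁)).symm (T₀ x + A h, T₁ h))
    (R₀ : WithLp 2 (H₀ × WithLp 2 (K₁ × H₁)) →L[ℂ] WithLp 2 (H₀ × WithLp 2 (K₁ × H₁)))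
    (hR₀ : ∀ (x : H₀) (k : K₁) (h : H₁),
      R₀ ((WithLp.equiv 2 (H₀ × WithLp 2 (K₁ × H₁))).symm
            (x, (WithLp.equiv 2 (K₁ × H₁)).symm (k, h)))
        = (WithLp.equiv 2 (H₀ × WithLp 2 (K₁ × H₁))).symm
            (T₀ x + A h, (WithLp.equiv 2 (K₁ × H₁)).symm (V₁ k + K h, T₁ h)))
    (hVpb : PowerBounded V) :
    PowerBounded R ↔ PowerBounded R₀ := by
  set eV := (WithLp.equiv 2 (K₁ × H₁)).symm with heV
  set eR := (WithLp.equiv 2 (H₀ × H₁)).symm with heR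
  set e₀ := (WithLp.equiv 2 (H₀ × WithLp 2 (K₁ × H₁))).symm with he₀
  -- norm formulas
  have nsqV : ∀ (k : K₁) (h : H₁), ‖eV (k, h)‖ ^ 2 = ‖k‖ ^ 2 + ‖h‖ ^ 2 := by
    intro k h
    rw [WithLp.prod_norm_sq_eq_of_L2]; rfl
  have nsqR : ∀ (x : H₀) (h : H₁), ‖eR (x, h)‖ ^ 2 = ‖x‖ ^ 2 + ‖h‖ ^ 2 := by
    intro x h
    rw [WithLp.prod_norm_sq_eq_of_L2]; rfl
  have nsq₀ : ∀ (x : H₀) (w : WithLp 2 (K₁ × H₁)), ‖e₀ (x, w)‖ ^ 2 = ‖x‖ ^ 2 + ‖w‖ ^ 2 := by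
    intro x w
    rw [WithLp.prod_norm_sq_eq_of_L2]; rfl
  -- the key structural formula for powers
  have key : ∀ (n : ℕ) (x : H₀) (k : K₁) (h : H₁), ∃ (a : H₀) (b : K₁),
      (R ^ n) (eR (x, h)) = eR (a, (T₁ ^ n) h) ∧
      (V ^ n) (eV (k, h)) = eV (b, (T₁ ^ n) h) ∧
      (R₀ ^ n) (e₀ (x, eV (k, h))) = e₀ (a, eV (b, (T₁ ^ n) h)) := by
    intro n
    induction n with
    | zero =>
        intro x k h
        exact ⟨x, k, by simp, by simp, by simp⟩
    | succ n ih =>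
        intro x k h
        obtain ⟨a, b, h1, h2, h3⟩ := ih x k h
        refine ⟨T₀ a + A ((T₁ ^ n) h), V₁ b + K ((T₁ ^ n) h), ?_, ?_, ?_⟩
        · rw [pow_succ', ContinuousLinearMap.mul_apply, h1, hR,
            pow_succ' T₁, ContinuousLinearMap.mul_apply]
        · rw [pow_succ', ContinuousLinearMap.mul_apply, h2, hV,
            pow_succ' T₁, ContinuousLinearMap.mul_apply]
        · rw [pow_succ', ContinuousLinearMap.mul_apply, h3, hR₀,
            pow_succ' T₁, ContinuousLinearMap.mul_apply]
  obtain ⟨CV, hCV⟩ := hVpb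
  have hCV0 : 0 ≤ CV := le_trans (norm_nonneg _) (hCV 0)
  constructor
  · rintro ⟨CR, hCR⟩
    have hCR0 : 0 ≤ CR := le_trans (norm_nonneg _) (hCR 0)
    refine ⟨Real.sqrt (CR ^ 2 + CV ^ 2), fun n => ?_⟩
    refine ContinuousLinearMap.opNorm_le_bound _ (Real.sqrt_nonneg _) (fun z => ?_)
    have hz : z = e₀ (z.fst, eV (z.snd.fst, z.snd.snd)) := rfl
    set x := z.fst; set k := z.snd.fst; set h := z.snd.snd
    obtain ⟨a, b, h1, h2, h3⟩ := key n x k h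
    have hRn : ‖(R ^ n) (eR (x, h))‖ ≤ CR * ‖eR (x, h)‖ :=
      le_trans (ContinuousLinearMap.le_opNorm _ _)
        (mul_le_mul_of_nonneg_right (hCR n) (norm_nonneg _))
    have hVn : ‖(V ^ n) (eV (k, h))‖ ≤ CV * ‖eV (k, h)‖ :=
      le_trans (ContinuousLinearMap.le_opNorm _ _)
        (mul_le_mul_of_nonneg_right (hCV n) (norm_nonneg _))
    have ha : ‖a‖ ^ 2 + ‖(T₁ ^ n) h‖ ^ 2 ≤ (CR * ‖eR (x, h)‖) ^ 2 := by
      calc ‖a‖ ^ 2 + ‖(T₁ ^ n) h‖ ^ 2 = ‖eR (a, (T₁ ^ n) h)‖ ^ 2 := (nsqR _ _).symm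
        _ = ‖(R ^ n) (eR (x, h))‖ ^ 2 := by rw [h1]
        _ ≤ (CR * ‖eR (x, h)‖) ^ 2 := by
            exact pow_le_pow_left₀ (norm_nonneg _) hRn 2
    have hb : ‖b‖ ^ 2 + ‖(T₁ ^ n) h‖ ^ 2 ≤ (CV * ‖eV (k, h)‖) ^ 2 := by
      calc ‖b‖ ^ 2 + ‖(T₁ ^ n) h‖ ^ 2 = ‖eV (b, (T₁ ^ n) h)‖ ^ 2 := (nsqV _ _).symm
        _ = ‖(V ^ n) (eV (k, h))‖ ^ 2 := by rw [h2]
        _ ≤ (CV * ‖eV (k, h)‖) ^ 2 := by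
            exact pow_le_pow_left₀ (norm_nonneg _) hVn 2
    have hzn : ‖z‖ ^ 2 = ‖x‖ ^ 2 + (‖k‖ ^ 2 + ‖h‖ ^ 2) := by
      rw [hz, nsq₀, nsqV]
    have hsq : ‖(R₀ ^ n) z‖ ^ 2 ≤ (CR ^ 2 + CV ^ 2) * ‖z‖ ^ 2 := by
      have e1 : ‖(R₀ ^ n) z‖ ^ 2
          = ‖a‖ ^ 2 + (‖b‖ ^ 2 + ‖(T₁ ^ n) h‖ ^ 2) := by
        rw [hz, h3, nsq₀, nsqV]
      have e2 : ‖eR (x, h)‖ ^ 2 = ‖x‖ ^ 2 + ‖h‖ ^ 2 := nsqR _ _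
      have e3 : ‖eV (k, h)‖ ^ 2 = ‖k‖ ^ 2 + ‖h‖ ^ 2 := nsqV _ _
      nlinarith [norm_nonneg ((T₁ ^ n) h), norm_nonneg x, norm_nonneg k,
        norm_nonneg h, sq_nonneg CR, sq_nonneg CV, norm_nonneg a, norm_nonneg b]
    have := Real.sqrt_le_sqrt hsq
    rwa [Real.sqrt_sq (norm_nonneg _), Real.sqrt_mul (by positivity),
      Real.sqrt_sq (norm_nonneg _)] at this
  · rintro ⟨C₀, hC₀⟩
    have hC₀0 : 0 ≤ C₀ := le_trans (norm_nonneg _) (hC₀ 0)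
    refine ⟨C₀, fun n => ?_⟩
    refine ContinuousLinearMap.opNorm_le_bound _ hC₀0 (fun v => ?_)
    have hv : v = eR (v.fst, v.snd) := rfl
    set x := v.fst; set h := v.snd
    obtain ⟨a, b, h1, h2, h3⟩ := key n x 0 h
    have hR₀n : ‖(R₀ ^ n) (e₀ (x, eV (0, h)))‖ ≤ C₀ * ‖e₀ (x, eV (0, h))‖ :=
      le_trans (ContinuousLinearMap.le_opNorm _ _)
        (mul_le_mul_of_nonneg_right (hC₀ n) (norm_nonneg _))
    have hsq : ‖(R ^ n) v‖ ^ 2 ≤ (C₀ * ‖v‖) ^ 2 := by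
      have e1 : ‖(R ^ n) v‖ ^ 2 = ‖a‖ ^ 2 + ‖(T₁ ^ n) h‖ ^ 2 := by
        rw [hv, h1, nsqR]
      have e2 : ‖(R₀ ^ n) (e₀ (x, eV (0, h)))‖ ^ 2
          = ‖a‖ ^ 2 + (‖b‖ ^ 2 + ‖(T₁ ^ n) h‖ ^ 2) := by
        rw [h3, nsq₀, nsqV]
      have e3 : ‖e₀ (x, eV (0, h))‖ ^ 2 = ‖x‖ ^ 2 + (0 + ‖h‖ ^ 2) := by
        rw [nsq₀, nsqV, norm_zero]; ring_nf
      have e4 : ‖v‖ ^ 2 = ‖x‖ ^ 2 + ‖h‖ ^ 2 := by rw [hv, nsqR]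
      have e5 : ‖(R₀ ^ n) (e₀ (x, eV (0, h)))‖ ^ 2
          ≤ (C₀ * ‖e₀ (x, eV (0, h))‖) ^ 2 :=
        pow_le_pow_left₀ (norm_nonneg _) hR₀n 2
      have e6 : (C₀ * ‖e₀ (x, eV (0, h))‖) ^ 2 = (C₀ * ‖v‖) ^ 2 := by
        rw [mul_pow, mul_pow, e3, e4]; ring
      linarith [sq_nonneg ‖b‖]
    have := Real.sqrt_le_sqrt hsq
    rwa [Real.sqrt_sq (norm_nonneg _), Real.sqrt_sq (by positivity)] at this
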